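/- For all integers r ≥ 2 and 0 ≤ k ≤ r - 2, there exists a simple binary matroid M of rank r that has a k-loose element and satisfies |E(M)| = 2^k · (r - k + 1). -/

import Mathlib

namespace Matroid

variable {α : Type*}

/-- A circuit of a matroid is a minimal dependent set. -/
def Circuit (M : Matroid α) (C : Set α) : Prop :=
  M.Dep C ∧ ∀ D, D ⊂ C → M.Indep D

/-- A coloop is an element belonging to every basis. -/
def Coloop (M : Matroid α) (e : α) : Prop :=
  e ∈ M.E ∧ ∀ B, M.IsBase B → e ∈ B

/-- A matroid is simple if every subset of the ground set with at most two
elements is independent. -/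
def Simple (M : Matroid α) : Prop :=
  ∀ e ∈ M.E, ∀ f ∈ M.E, M.Indep {e, f}

/-- The rank of a matroid: the supremum of the cardinalities of its bases. -/
noncomputable def rk (M : Matroid α) : ℕ :=
  sSup {n | ∃ B, M.IsBase B ∧ B.ncard = n}

/-- A matroid is representable over a field `F` if independence in `M` coincides
with linear independence under some assignment of vectors to ground set elements. -/
def RepresentableOver (M : Matroid α) (F : Type) [Field F] : Prop :=
  ∃ (n : ℕ) (φ : α → (Fin n → F)),
    ∀ I, I ⊆ M.E → (M.Indep I ↔ LinearIndependent F (fun x : I => φ x))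

/-- An element `e` is `k`-loose if every circuit containing `e` has size
greater than `r - k`, where `r` is the rank of the matroid. -/
def KLoose (M : Matroid α) (k : ℕ) (e : α) : Prop :=
  e ∈ M.E ∧ ∀ C, M.Circuit C → e ∈ C → M.rk - k < C.ncard

/-- A matroid is `k`-paving if every element is `k`-loose. -/
def KPaving (M : Matroid α) (k : ℕ) : Prop :=
  ∀ e ∈ M.E, M.KLoose k e

end Matroid


namespace SharpAux

open Set Submodule Function

variable (m k : ℕ)

abbrev W := Fin k → ZMod 2
abbrev V := (Fin m ⊕ Fin k) → ZMod 2
abbrev G := Fin (m + 1) × W k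

def vec (g : G m k) : V m k :=
  Sum.elim
    (fun i => if g.1 = 0 then (if g.2 = 0 then (1:ZMod 2) else 0)
      else if (g.1 : ℕ) = (i : ℕ) + 1 then 1 else 0)
    g.2

variable {m k}

lemma vec_inl (g : G m k) (i : Fin m) :
    vec m k g (Sum.inl i) = if g.1 = 0 then (if g.2 = 0 then (1:ZMod 2) else 0)
      else if (g.1 : ℕ) = (i : ℕ) + 1 then 1 else 0 := rfl

lemma vec_inr (g : G m k) (j : Fin k) : vec m k g (Sum.inr j) = g.2 j := rfl

lemma exists_other (hm : 2 ≤ m) (i : Fin m) : ∃ i2 : Fin m, (i2 : ℕ) ≠ (i : ℕ) := by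
  by_cases h : (i : ℕ) = 0
  · exact ⟨⟨1, by omega⟩, by simp [h]⟩
  · exact ⟨⟨0, by omega⟩, by simpa using Ne.symm h⟩

lemma vec_injective (hm : 2 ≤ m) : Function.Injective (vec m k) := by
  rintro ⟨t, w⟩ ⟨t', w'⟩ h
  have hw : w = w' := by
    funext j; simpa [vec_inr] using congrFun h (Sum.inr j)
  subst hw
  suffices ht : t = t' by rw [ht]
  by_cases h0 : t = 0 <;> by_cases h0' : t' = 0
  · rw [h0, h0']
  · exfalso
    have ht' : (t' : ℕ) ≠ 0 := fun hc => h0' (Fin.ext hc)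
    have hlt : (t' : ℕ) - 1 < m := by omega
    set i : Fin m := ⟨(t' : ℕ) - 1, hlt⟩ with hi
    have hiv : (i : ℕ) = (t' : ℕ) - 1 := by rw [hi]
    by_cases hw0 : w = 0
    · obtain ⟨i2, hi2⟩ := exists_other hm i
      have h2 := congrFun h (Sum.inl i2)
      rw [vec_inl, vec_inl] at h2
      simp only [h0, if_pos, hw0, if_pos, if_neg h0'] at h2
      rw [if_neg (by omega)] at h2
      exact one_ne_zero h2
    · have h1 := congrFun h (Sum.inl i)
      rw [vec_inl, vec_inl] at h1
      simp only [h0, if_pos, if_neg hw0, if_neg h0'] at h1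
      rw [if_pos (by omega)] at h1
      exact one_ne_zero h1.symm
  · exfalso
    have ht : (t : ℕ) ≠ 0 := fun hc => h0 (Fin.ext hc)
    have hlt : (t : ℕ) - 1 < m := by omega
    set i : Fin m := ⟨(t : ℕ) - 1, hlt⟩ with hi
    have hiv : (i : ℕ) = (t : ℕ) - 1 := by rw [hi]
    by_cases hw0 : w = 0
    · obtain ⟨i2, hi2⟩ := exists_other hm i
      have h2 := congrFun h (Sum.inl i2)
      rw [vec_inl, vec_inl] at h2
      simp only [h0', if_pos, hw0, if_pos, if_neg h0] at h2
      rw [if_neg (by omega)] at h2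
      exact one_ne_zero h2.symm
    · have h1 := congrFun h (Sum.inl i)
      rw [vec_inl, vec_inl] at h1
      simp only [h0', if_pos, if_neg hw0, if_neg h0] at h1
      rw [if_pos (by omega)] at h1
      exact one_ne_zero h1
  · have ht : (t : ℕ) ≠ 0 := fun hc => h0 (Fin.ext hc)
    have hlt : (t : ℕ) - 1 < m := by omega
    have h1 := congrFun h (Sum.inl ⟨(t : ℕ) - 1, hlt⟩)
    rw [vec_inl, vec_inl] at h1
    rw [if_neg h0, if_neg h0', if_pos (by simp only [Fin.val_mk]; omega)] at h1
    by_cases he : (t' : ℕ) = (t : ℕ)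
    · exact Fin.ext he.symm
    · rw [if_neg (by simp only [Fin.val_mk]; omega)] at h1
      exact absurd h1 one_ne_zero

lemma vec_ne_zero (hm : 2 ≤ m) (g : G m k) : vec m k g ≠ 0 := by
  obtain ⟨t, w⟩ := g
  intro hc
  by_cases h0 : t = 0
  · by_cases hw0 : w = 0
    · have h1 := congrFun hc (Sum.inl ⟨0, by omega⟩)
      rw [vec_inl, if_pos h0, if_pos hw0] at h1
      exact one_ne_zero h1
    · obtain ⟨j, hj⟩ := Function.ne_iff.mp hw0
      have h1 := congrFun hc (Sum.inr j)
      rw [vec_inr] at h1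
      exact hj (by simpa using h1)
  · have ht : (t : ℕ) ≠ 0 := fun hc2 => h0 (Fin.ext hc2)
    have hlt : (t : ℕ) - 1 < m := by omega
    have h1 := congrFun hc (Sum.inl ⟨(t : ℕ) - 1, hlt⟩)
    rw [vec_inl, if_neg h0, if_pos (by simp only [Fin.val_mk]; omega)] at h1
    exact one_ne_zero h1

noncomputable def enc (g : G m k) : ℕ := (Fintype.equivFin (G m k) g : ℕ)

lemma enc_injective : Function.Injective (enc (m := m) (k := k)) :=
  Fin.val_injective.comp (Fintype.equivFin (G m k)).injective

noncomputable def Eset : Set ℕ := Set.range (enc (m := m) (k := k))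

lemma Eset_finite : (Eset (m := m) (k := k)).Finite := Set.finite_range _

noncomputable def phi : ℕ → V m k := Function.extend enc (vec m k) 0

lemma phi_enc (g : G m k) : phi (enc g) = vec m k g :=
  enc_injective.extend_apply _ _ g

lemma mem_Eset {x : ℕ} (hx : x ∈ Eset (m := m) (k := k)) : ∃ g, enc g = x ∧ phi x = vec m k g := by
  obtain ⟨g, rfl⟩ := hx
  exact ⟨g, rfl, phi_enc g⟩

lemma phi_injOn (hm : 2 ≤ m) : Set.InjOn (phi (m := m) (k := k)) (Eset (m := m) (k := k)) := by
  rintro x ⟨g, rfl⟩ y ⟨g', rfl⟩ h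
  rw [phi_enc, phi_enc] at h
  rw [vec_injective hm h]

/-- the independence predicate -/
def IndepP (I : Set ℕ) : Prop :=
  I ⊆ Eset (m := m) (k := k) ∧ LinearIndependent (ZMod 2) (fun x : I => phi (m := m) (k := k) x)

lemma indep_aug (hm : 2 ≤ m) ⦃I J : Set ℕ⦄ (hI : IndepP (m := m) (k := k) I)
    (hJ : IndepP (m := m) (k := k) J) (hcard : I.ncard < J.ncard) :
    ∃ e ∈ J, e ∉ I ∧ IndepP (m := m) (k := k) (insert e I) := by
  classical
  by_contra hcon
  push_neg at hcon
  have hIfin : I.Finite := Eset_finite.subset hI.1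
  have hJfin : J.Finite := Eset_finite.subset hJ.1
  have hspan : ∀ e ∈ J, phi (m := m) (k := k) e ∈ span (ZMod 2) (phi (m := m) (k := k) '' I) := by
    intro e he
    by_cases heI : e ∈ I
    · exact subset_span (Set.mem_image_of_mem _ heI)
    · by_contra hns
      exact hcon e he heI ⟨Set.insert_subset (hJ.1 he) hI.1,
        (linearIndepOn_insert heI).mpr ⟨hI.2, hns⟩⟩
  -- independence of image sets
  have hIinj : Set.InjOn (phi (m := m) (k := k)) I := (phi_injOn hm).mono hI.1
  have hJinj : Set.InjOn (phi (m := m) (k := k)) J := (phi_injOn hm).mono hJ.1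
  have hSI : LinearIndependent (ZMod 2) ((↑) : (phi (m := m) (k := k) '' I) → V m k) :=
    (linearIndepOn_iff_image hIinj).mp hI.2
  have hSJ : LinearIndependent (ZMod 2) ((↑) : (phi (m := m) (k := k) '' J) → V m k) :=
    (linearIndepOn_iff_image hJinj).mp hJ.2
  have hle : span (ZMod 2) (phi (m := m) (k := k) '' J) ≤ span (ZMod 2) (phi (m := m) (k := k) '' I) := by
    rw [span_le]
    rintro v ⟨e, he, rfl⟩
    exact hspan e he
  haveI : Fintype (phi (m := m) (k := k) '' I) := (hIfin.image _).fintype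
  haveI : Fintype (phi (m := m) (k := k) '' J) := (hJfin.image _).fintype
  have h1 : Module.finrank (ZMod 2) (span (ZMod 2) (phi (m := m) (k := k) '' I))
      = (phi (m := m) (k := k) '' I).toFinset.card := finrank_span_set_eq_card hSI
  have h2 : Module.finrank (ZMod 2) (span (ZMod 2) (phi (m := m) (k := k) '' J))
      = (phi (m := m) (k := k) '' J).toFinset.card := finrank_span_set_eq_card hSJ
  have hmono := Submodule.finrank_mono hle
  rw [h1, h2] at hmono
  rw [← Set.ncard_eq_toFinset_card', ← Set.ncard_eq_toFinset_card'] at hmono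
  rw [Set.ncard_image_of_injOn hIinj, Set.ncard_image_of_injOn hJinj] at hmono
  omega

noncomputable def M (hm : 2 ≤ m) : Matroid ℕ :=
  (IndepMatroid.ofFinite (Eset_finite (m := m) (k := k)) (IndepP (m := m) (k := k))
    ⟨Set.empty_subset _, linearIndependent_empty_type⟩
    (fun I J hJ hIJ => ⟨hIJ.trans hJ.1,
      hJ.2.comp (Set.inclusion hIJ) (Set.inclusion_injective hIJ)⟩)
    (indep_aug hm)
    (fun I hI => hI.1)).matroid

lemma M_E (hm : 2 ≤ m) : (M (m := m) (k := k) hm).E = Eset (m := m) (k := k) := rfl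

lemma M_indep_iff (hm : 2 ≤ m) {I : Set ℕ} :
    (M (m := m) (k := k) hm).Indep I ↔ IndepP (m := m) (k := k) I := by
  exact Iff.rfl

lemma M_finite (hm : 2 ≤ m) : (M (m := m) (k := k) hm).Finite := ⟨Eset_finite⟩

lemma single_mem (hm : 2 ≤ m) (j : Fin m ⊕ Fin k) :
    Pi.single j (1 : ZMod 2) ∈ phi (m := m) (k := k) '' Eset (m := m) (k := k) := by
  classical
  cases j with
  | inl i =>
    refine ⟨enc (⟨(i : ℕ) + 1, by omega⟩, 0), ⟨_, rfl⟩, ?_⟩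
    rw [phi_enc]
    funext x
    cases x with
    | inl i' =>
      rw [vec_inl]
      rw [if_neg (by simp [Fin.ext_iff])]
      simp only [Fin.val_mk, Pi.single_apply]
      by_cases h : i' = i
      · rw [if_pos (by omega), if_pos (by rw [h])]
      · rw [if_neg (by simp [Fin.ext_iff] at h ⊢; omega), if_neg (by simp [h])]
    | inr j' => rw [vec_inr]; simp
  | inr j0 =>
    refine ⟨enc (0, Pi.single j0 1), ⟨_, rfl⟩, ?_⟩
    rw [phi_enc]
    funext x
    cases x with
    | inl i' =>
      rw [vec_inl, if_pos rfl]
      rw [if_neg (by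
        intro hc
        have := congrFun hc j0
        simp at this)]
      simp
    | inr j' =>
      rw [vec_inr]
      simp only [Pi.single_apply]
      by_cases h : j' = j0
      · subst h; simp
      · simp [h, Sum.inr.injEq, Ne.symm]

lemma span_top (hm : 2 ≤ m) :
    span (ZMod 2) (phi (m := m) (k := k) '' Eset (m := m) (k := k)) = ⊤ := by
  classical
  rw [eq_top_iff, ← (Pi.basisFun (ZMod 2) (Fin m ⊕ Fin k)).span_eq, span_le]
  rintro v ⟨j, rfl⟩
  rw [Pi.basisFun_apply]
  exact subset_span (single_mem hm j)

lemma base_ncard (hm : 2 ≤ m) {B : Set ℕ} (hB : (M (m := m) (k := k) hm).IsBase B) :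
    B.ncard = m + k := by
  classical
  rw [Matroid.isBase_iff_maximal_indep] at hB
  obtain ⟨hBi, hBmax⟩ := hB
  rw [M_indep_iff] at hBi
  obtain ⟨hBE, hBli⟩ := hBi
  have hBfin : B.Finite := Eset_finite.subset hBE
  have hBinj : Set.InjOn (phi (m := m) (k := k)) B := (phi_injOn hm).mono hBE
  have hS : LinearIndependent (ZMod 2) ((↑) : (phi (m := m) (k := k) '' B) → V m k) :=
    (linearIndepOn_iff_image hBinj).mp hBli
  have hspan : span (ZMod 2) (phi (m := m) (k := k) '' B) = ⊤ := by
    rw [eq_top_iff, ← span_top (m := m) (k := k) hm, span_le]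
    rintro v ⟨e, he, rfl⟩
    by_contra hns
    have heB : e ∉ B := fun h => hns (subset_span (Set.mem_image_of_mem _ h))
    have hins : (M (m := m) (k := k) hm).Indep (insert e B) := by
      rw [M_indep_iff]
      exact ⟨Set.insert_subset he hBE, (linearIndepOn_insert heB).mpr ⟨hBli, hns⟩⟩
    have := hBmax hins (Set.subset_insert e B)
    exact heB (this (Set.mem_insert e B))
  haveI : Fintype (phi (m := m) (k := k) '' B) := ((hBfin.image _)).fintype
  have h1 : Module.finrank (ZMod 2) (span (ZMod 2) (phi (m := m) (k := k) '' B))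
      = (phi (m := m) (k := k) '' B).toFinset.card := finrank_span_set_eq_card hS
  rw [hspan, finrank_top, ← Set.ncard_eq_toFinset_card', Set.ncard_image_of_injOn hBinj] at h1
  rw [← h1, Module.finrank_pi]
  simp

lemma rk_eq (hm : 2 ≤ m) : (M (m := m) (k := k) hm).rk = m + k := by
  have hset : {n | ∃ B, (M (m := m) (k := k) hm).IsBase B ∧ B.ncard = n} = {m + k} := by
    ext n
    constructor
    · rintro ⟨B, hB, rfl⟩
      exact base_ncard hm hB
    · rintro rfl
      obtain ⟨B, hB⟩ := (M (m := m) (k := k) hm).exists_isBase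
      exact ⟨B, hB, base_ncard hm hB⟩
  rw [Matroid.rk, hset, csSup_singleton]

lemma phi_ne_zero (hm : 2 ≤ m) {x : ℕ} (hx : x ∈ Eset (m := m) (k := k)) :
    phi (m := m) (k := k) x ≠ 0 := by
  obtain ⟨g, rfl, hg⟩ := mem_Eset hx
  rw [hg]
  exact vec_ne_zero hm g

lemma singleton_indep (hm : 2 ≤ m) {x : ℕ} (hx : x ∈ Eset (m := m) (k := k)) :
    LinearIndependent (ZMod 2) (fun y : ({x} : Set ℕ) => phi (m := m) (k := k) y) := by
  rw [linearIndependent_unique_iff]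
  have hd : ((default : ({x} : Set ℕ)) : ℕ) = x := by rw [Set.default_coe_singleton]
  rw [hd]
  exact phi_ne_zero hm hx

lemma M_simple (hm : 2 ≤ m) : (M (m := m) (k := k) hm).Simple := by
  intro e he f hf
  rw [M_E] at he hf
  rw [M_indep_iff]
  refine ⟨Set.insert_subset he (Set.singleton_subset_iff.mpr hf), ?_⟩
  by_cases hef : e = f
  · subst hef
    rw [Set.pair_eq_singleton]
    exact singleton_indep hm he
  · refine (linearIndepOn_insert (by simpa using hef)).mpr ?_
    refine ⟨singleton_indep hm hf, ?_⟩
    rw [Set.image_singleton]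
    intro hmem
    rw [Submodule.mem_span_singleton] at hmem
    obtain ⟨a, ha⟩ := hmem
    have h2 : ∀ a : ZMod 2, a = 0 ∨ a = 1 := by decide
    rcases h2 a with rfl | rfl
    · rw [zero_smul] at ha
      exact phi_ne_zero hm he ha.symm
    · rw [one_smul] at ha
      exact hef ((phi_injOn hm hf he ha).symm)

lemma M_representable (hm : 2 ≤ m) :
    (M (m := m) (k := k) hm).RepresentableOver (ZMod 2) := by
  refine ⟨m + k, fun x => (LinearEquiv.funCongrLeft (ZMod 2) (ZMod 2)
    finSumFinEquiv.symm) (phi (m := m) (k := k) x), fun I hIE => ?_⟩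
  rw [M_indep_iff]
  have : IndepP (m := m) (k := k) I ↔ LinearIndependent (ZMod 2)
      (fun x : I => phi (m := m) (k := k) x) := by
    rw [M_E] at hIE
    exact ⟨fun h => h.2, fun h => ⟨hIE, h⟩⟩
  rw [this]
  set L := (LinearEquiv.funCongrLeft (ZMod 2) (ZMod 2) finSumFinEquiv.symm)
  rw [← LinearMap.linearIndependent_iff (L.toLinearMap) L.ker]
  rfl

lemma ncard_Eset : (Eset (m := m) (k := k)).ncard = (m + 1) * 2 ^ k := by
  classical
  rw [Eset, ← Set.image_univ, Set.ncard_image_of_injOn (enc_injective.injOn),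
    Set.ncard_univ, Nat.card_eq_fintype_card]
  rw [Fintype.card_prod, Fintype.card_fin, Fintype.card_fun]
  simp [ZMod.card]

/-- the distinguished element -/
noncomputable def eElem : ℕ := enc (m := m) (k := k) (0, 0)

lemma eElem_mem : eElem (m := m) (k := k) ∈ Eset (m := m) (k := k) := ⟨_, rfl⟩

lemma phi_eElem_inl (i : Fin m) :
    phi (m := m) (k := k) (eElem (m := m) (k := k)) (Sum.inl i) = 1 := by
  rw [eElem, phi_enc, vec_inl]
  simp

lemma circuit_large (hm : 2 ≤ m) {C : Set ℕ}
    (hC : (M (m := m) (k := k) hm).Circuit C) (heC : eElem (m := m) (k := k) ∈ C) :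
    m < C.ncard := by
  classical
  obtain ⟨hCdep, hCmin⟩ := hC
  have hCE : C ⊆ Eset (m := m) (k := k) := hCdep.subset_ground
  have hCfin : C.Finite := Eset_finite.subset hCE
  set e := eElem (m := m) (k := k) with he
  have hI0 : (M (m := m) (k := k) hm).Indep (C \ {e}) :=
    hCmin _ (Set.sdiff_singleton_ssubset.mpr heC)
  rw [M_indep_iff] at hI0
  have hCnotindep : ¬ LinearIndependent (ZMod 2) (fun x : C => phi (m := m) (k := k) x) := by
    intro h
    exact hCdep.not_indep ((M_indep_iff hm).mpr ⟨hCE, h⟩)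
  have hespan : phi (m := m) (k := k) e ∈
      span (ZMod 2) (phi (m := m) (k := k) '' (C \ {e})) := by
    by_contra hns
    apply hCnotindep
    have h1 : LinearIndependent (ZMod 2)
        (fun x : (insert e (C \ {e}) : Set ℕ) => phi (m := m) (k := k) x) :=
      (linearIndepOn_insert (by simp)).mpr ⟨hI0.2, hns⟩
    rwa [Set.insert_diff_singleton, Set.insert_eq_self.mpr heC] at h1
  rw [mem_span_set] at hespan
  obtain ⟨c, hsupp, hsum⟩ := hespan
  -- for each i, find an element of the support hitting coordinate inl i
  have hexists : ∀ i : Fin m, ∃ v ∈ c.support, ∃ g : G m k,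
      v = vec m k g ∧ ((g.1 : ℕ) = (i : ℕ) + 1) := by
    intro i
    have hval := congrFun hsum (Sum.inl i)
    rw [phi_eElem_inl] at hval
    rw [Finsupp.sum, Finset.sum_apply] at hval
    have hsumne : ∑ v ∈ c.support, (c v • v) (Sum.inl i) ≠ 0 := by
      rw [hval]; exact one_ne_zero
    obtain ⟨v, hv, hvne⟩ := Finset.exists_ne_zero_of_sum_ne_zero hsumne
    have hvi : v (Sum.inl i) ≠ 0 := by
      intro h0
      apply hvne
      rw [Pi.smul_apply, h0, smul_zero]
    have hvmem : v ∈ phi (m := m) (k := k) '' (C \ {e}) := hsupp hv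
    obtain ⟨y, hy, rfl⟩ := hvmem
    obtain ⟨g, hgenc, hgphi⟩ := mem_Eset (hCE hy.1)
    refine ⟨phi (m := m) (k := k) y, hv, g, hgphi, ?_⟩
    have hgne : g ≠ (0, 0) := by
      rintro rfl
      exact hy.2 (by rw [← hgenc]; rfl)
    rw [hgphi, vec_inl] at hvi
    by_cases h0 : g.1 = 0
    · exfalso
      rw [if_pos h0] at hvi
      have hw : g.2 ≠ 0 := by
        intro hw0
        exact hgne (Prod.ext h0 hw0)
      rw [if_neg hw] at hvi
      exact hvi rfl
    · rw [if_neg h0] at hvi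
      by_contra hne
      rw [if_neg hne] at hvi
      exact hvi rfl
  choose v hvmem g hvg hgval using hexists
  have hinj : Set.InjOn v (Finset.univ : Finset (Fin m)) := by
    intro i _ i' _ hii
    rw [hvg, hvg] at hii
    have := vec_injective hm hii
    have hval : ((g i).1 : ℕ) = ((g i').1 : ℕ) := by rw [this]
    rw [hgval, hgval] at hval
    exact Fin.ext (by omega)
  have hcard1 : m ≤ c.support.card := by
    have := Finset.card_le_card_of_injOn v (fun i _ => hvmem i) hinj
    simpa using this
  have hcard2 : c.support.card ≤ (C \ {e}).ncard := by
    rw [← Set.ncard_coe_finset]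
    calc ((c.support : Set (V m k))).ncard
        ≤ (phi (m := m) (k := k) '' (C \ {e})).ncard :=
          Set.ncard_le_ncard hsupp ((hCfin.diff (t := {e})).image _)
      _ = (C \ {e}).ncard := Set.ncard_image_of_injOn
          ((phi_injOn hm).mono ((Set.diff_subset).trans hCE))
  have hCne : (C \ {e}).ncard = C.ncard - 1 := Set.ncard_diff_singleton_of_mem heC
  have hCpos : 0 < C.ncard := Set.ncard_pos hCfin |>.mpr ⟨e, heC⟩
  omega

end SharpAux

/-- For all `r ≥ 2` and `0 ≤ k ≤ r - 2`, there exists a simple binary matroid of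
rank `r` with a `k`-loose element whose size is exactly `2^k (r - k + 1)`. -/
theorem sharp_example (r k : ℕ) (hr : 2 ≤ r) (hk : k ≤ r - 2) :
    ∃ M : Matroid ℕ, M.Finite ∧ M.Simple ∧ M.RepresentableOver (ZMod 2) ∧
      M.rk = r ∧ (∃ e, M.KLoose k e) ∧ M.E.ncard = 2 ^ k * (r - k + 1) := by
  have hm : 2 ≤ r - k := by omega
  have hmk : (r - k) + k = r := by omega
  refine ⟨SharpAux.M (m := r - k) (k := k) hm, SharpAux.M_finite hm, SharpAux.M_simple hm,
    SharpAux.M_representable hm, by rw [SharpAux.rk_eq hm, hmk], ?_, ?_⟩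
  · refine ⟨SharpAux.eElem, SharpAux.eElem_mem, ?_⟩
    intro C hC heC
    have hlarge := SharpAux.circuit_large hm hC heC
    rw [SharpAux.rk_eq hm]
    omega
  · rw [SharpAux.M_E, SharpAux.ncard_Eset, mul_comm]
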